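/- arXiv:2408.06542 — 2 statements merged into one kernel-verified Lean document; each statement's English description precedes it below -/
import Mathlib

section
/- Let R_max = max_{(s,a)} |R(s,a)|. Then ∑_{o : P(o|b) > 0} P(o|b) · max_{a∈A} ∑_s b(s|o)·R(s,a) − max_{a∈A} ∑_s b(s)·R(s,a) ≤ R_max · √(2·∑_{o : P(o|b) > 0} P(o|b)·KL(b(·|o) ‖ b)). (Note that b(s) = 0 implies b(s|o) = 0, so each KL term is well defined.) -/
/-- A belief over a finite set: nonnegative and sums to one. -/
def IsBelief {X : Type*} [Fintype X] (p : X → ℝ) : Prop :=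
  (∀ x, 0 ≤ p x) ∧ ∑ x, p x = 1

/-- KL divergence between two distributions on a finite set. -/
noncomputable def KL {X : Type*} [Fintype X] (p q : X → ℝ) : ℝ :=
  ∑ x, if 0 < p x then p x * Real.log (p x / q x) else 0

open Real

set_option linter.unusedSectionVars false

private noncomputable def Gfun (r : ℝ) : ℝ := (r+1) * Real.log r - 2*(r-1)
private noncomputable def Ffun (r : ℝ) : ℝ :=
  (2*r+4)*(r*Real.log r - r + 1) - 3*(r-1)^2

private lemma log_lb {r : ℝ} (hr : 0 < r) : 1 - r⁻¹ ≤ Real.log r := by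
  have h := Real.log_le_sub_one_of_pos (x := r⁻¹) (by positivity)
  rw [Real.log_inv] at h
  linarith

private lemma G_hasDeriv {r : ℝ} (hr : 0 < r) :
    HasDerivAt Gfun (Real.log r + r⁻¹ - 1) r := by
  have h1 : HasDerivAt (fun x : ℝ => (x+1) * Real.log x)
      (1 * Real.log r + (r+1) * r⁻¹) r := by
    exact (hasDerivAt_id r |>.add_const 1).mul (Real.hasDerivAt_log hr.ne')
  have h2 : HasDerivAt (fun x : ℝ => 2*(x-1)) 2 r := by
    simpa using ((hasDerivAt_id r).sub_const 1).const_mul 2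
  have := h1.sub h2
  refine (this : HasDerivAt (fun x : ℝ => (x+1) * Real.log x - 2*(x-1)) _ r).congr_deriv ?_
  have : (r+1) * r⁻¹ = 1 + r⁻¹ := by field_simp
  rw [this]; ring

private lemma G_mono : MonotoneOn Gfun (Set.Ioi (0:ℝ)) := by
  have hint : interior (Set.Ioi (0:ℝ)) = Set.Ioi 0 := interior_Ioi
  apply monotoneOn_of_deriv_nonneg (convex_Ioi 0)
  · intro x hx
    exact ((G_hasDeriv hx).continuousAt).continuousWithinAt
  · rw [hint]; intro x hx; exact (G_hasDeriv hx).differentiableAt.differentiableWithinAt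
  · rw [hint]; intro x hx
    rw [(G_hasDeriv hx).deriv]
    have := log_lb hx
    linarith

private lemma G_sign_ge {r : ℝ} (hr : 1 ≤ r) : 0 ≤ Gfun r := by
  have := G_mono (Set.mem_Ioi.2 one_pos) (Set.mem_Ioi.2 (lt_of_lt_of_le one_pos hr)) hr
  simpa [Gfun] using this

private lemma G_sign_le {r : ℝ} (h0 : 0 < r) (hr : r ≤ 1) : Gfun r ≤ 0 := by
  have := G_mono (Set.mem_Ioi.2 h0) (Set.mem_Ioi.2 one_pos) hr
  simpa [Gfun] using this

private lemma F_hasDeriv {r : ℝ} (hr : 0 < r) :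
    HasDerivAt Ffun (4 * Gfun r) r := by
  have h1 : HasDerivAt (fun x : ℝ => x * Real.log x) (Real.log r + 1) r :=
    Real.hasDerivAt_mul_log hr.ne'
  have h2 : HasDerivAt (fun x : ℝ => x * Real.log x - x + 1) (Real.log r + 1 - 1) r :=
    (h1.sub (hasDerivAt_id r)).add_const 1
  have h3 : HasDerivAt (fun x : ℝ => 2*x+4) 2 r := by
    simpa using ((hasDerivAt_id r).const_mul 2).add_const 4
  have h4 := h3.mul h2
  have h5 : HasDerivAt (fun x : ℝ => 3*(x-1)^2) (3*(2*(r-1))) r := by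
    have := (((hasDerivAt_id r).sub_const 1).pow 2).const_mul 3
    simpa using this
  have := h4.sub h5
  refine (this : HasDerivAt (fun x : ℝ => (2*x+4) * (x * Real.log x - x + 1) - 3*(x-1)^2) _ r).congr_deriv ?_
  simp only [Gfun]
  ring

private lemma F_one : Ffun 1 = 0 := by simp [Ffun]

private lemma F_nonneg {r : ℝ} (hr : 0 < r) : 0 ≤ Ffun r := by
  rcases le_or_gt r 1 with h | h
  · have hanti : AntitoneOn Ffun (Set.Ioc (0:ℝ) 1) := by
      have hint : interior (Set.Ioc (0:ℝ) 1) = Set.Ioo 0 1 := interior_Ioc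
      apply antitoneOn_of_deriv_nonpos (convex_Ioc 0 1)
      · intro x hx; exact ((F_hasDeriv hx.1).continuousAt).continuousWithinAt
      · rw [hint]; intro x hx
        exact (F_hasDeriv hx.1).differentiableAt.differentiableWithinAt
      · rw [hint]; intro x hx
        rw [(F_hasDeriv hx.1).deriv]
        have := G_sign_le hx.1 hx.2.le
        linarith
    have := hanti ⟨hr, h⟩ ⟨one_pos, le_refl 1⟩ h
    rw [F_one] at this; exact this
  · have hmono : MonotoneOn Ffun (Set.Ici (1:ℝ)) := by
      have hint : interior (Set.Ici (1:ℝ)) = Set.Ioi 1 := interior_Ici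
      apply monotoneOn_of_deriv_nonneg (convex_Ici 1)
      · intro x hx
        exact ((F_hasDeriv (lt_of_lt_of_le one_pos hx)).continuousAt).continuousWithinAt
      · rw [hint]; intro x hx
        exact (F_hasDeriv (lt_trans one_pos hx)).differentiableAt.differentiableWithinAt
      · rw [hint]; intro x hx
        rw [(F_hasDeriv (lt_trans one_pos hx)).deriv]
        have := G_sign_ge (le_of_lt hx)
        linarith
    have := hmono (Set.mem_Ici.2 (le_refl 1)) (Set.mem_Ici.2 h.le) h.le
    rw [F_one] at this; exact this

/-- pointwise Pinsker-type inequality -/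
private lemma key_ineq (p q : ℝ) (hp : 0 ≤ p) (hq : 0 ≤ q) (hac : q = 0 → p = 0) :
    3*(p-q)^2 ≤ (2*p+4*q) * ((if 0 < p then p * Real.log (p/q) else 0) - p + q) := by
  rcases eq_or_lt_of_le hq with hq0 | hq0
  · have hp0 := hac hq0.symm
    subst hp0; rw [← hq0]; norm_num
  rcases eq_or_lt_of_le hp with hp0 | hp0
  · rw [← hp0]; rw [if_neg (lt_irrefl 0)]; nlinarith
  · rw [if_pos hp0]
    have h := F_nonneg (r := p/q) (by positivity)
    have hexp : q^2 * Ffun (p/q) = (2*p+4*q) * (p * Real.log (p/q) - p + q) - 3*(p-q)^2 := by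
      simp only [Ffun]
      field_simp
    nlinarith [sq_nonneg q, mul_nonneg (sq_nonneg q) h]

section Pinsker
variable {X : Type*} [Fintype X] (p q : X → ℝ)

private noncomputable def Tterm (x : X) : ℝ :=
  (if 0 < p x then p x * Real.log (p x / q x) else 0) - p x + q x

private lemma T_nonneg (hp : ∀ x, 0 ≤ p x) (hq : ∀ x, 0 ≤ q x)
    (hac : ∀ x, q x = 0 → p x = 0) (x : X) : 0 ≤ Tterm p q x := by
  have h := key_ineq (p x) (q x) (hp x) (hq x) (hac x)
  have hpx' := hp x; have hqx' := hq x
  rcases eq_or_lt_of_le (by positivity : (0:ℝ) ≤ 2 * p x + 4 * q x) with h0 | h0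
  · have hpx : p x = 0 := by nlinarith [hp x, hq x]
    have hqx : q x = 0 := by nlinarith [hp x, hq x]
    simp [Tterm, hpx, hqx]
  · have := sq_nonneg (p x - q x)
    have : 0 ≤ (2 * p x + 4 * q x) * Tterm p q x := by
      simp only [Tterm]; nlinarith
    exact nonneg_of_mul_nonneg_right this h0

private lemma sum_T (hp : IsBelief p) (hq : IsBelief q) :
    ∑ x, Tterm p q x = KL p q := by
  simp only [Tterm, KL, Finset.sum_add_distrib, Finset.sum_sub_distrib, hp.2, hq.2]
  ring

private theorem KL_nonneg (hp : IsBelief p) (hq : IsBelief q)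
    (hac : ∀ x, q x = 0 → p x = 0) : 0 ≤ KL p q := by
  rw [← sum_T p q hp hq]
  exact Finset.sum_nonneg fun x _ => T_nonneg p q hp.1 hq.1 hac x

private theorem pinsker (hp : IsBelief p) (hq : IsBelief q)
    (hac : ∀ x, q x = 0 → p x = 0) :
    ∑ x, |p x - q x| ≤ Real.sqrt (2 * KL p q) := by
  set f : X → ℝ := fun x => Real.sqrt ((2 * p x + 4 * q x)/3)
  set g : X → ℝ := fun x => Real.sqrt (Tterm p q x)
  have hT := T_nonneg p q hp.1 hq.1 hac
  have habs : ∀ x, |p x - q x| ≤ f x * g x := by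
    intro x
    have h := key_ineq (p x) (q x) (hp.1 x) (hq.1 x) (hac x)
    have hpx' := hp.1 x; have hqx' := hq.1 x
    have : (f x * g x)^2 = (2 * p x + 4 * q x)/3 * Tterm p q x := by
      rw [mul_pow, Real.sq_sqrt (by positivity), Real.sq_sqrt (hT x)]
    have h2 : |p x - q x|^2 ≤ (f x * g x)^2 := by
      rw [this, sq_abs]
      simp only [Tterm] at *
      nlinarith
    calc |p x - q x| = Real.sqrt (|p x - q x|^2) := (Real.sqrt_sq (abs_nonneg _)).symm
      _ ≤ Real.sqrt ((f x * g x)^2) := Real.sqrt_le_sqrt h2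
      _ = f x * g x := Real.sqrt_sq (by positivity)
  have hfg : ∑ x, |p x - q x| ≤ ∑ x, f x * g x := Finset.sum_le_sum fun x _ => habs x
  have hcs := Finset.sum_mul_sq_le_sq_mul_sq Finset.univ f g
  have hf2 : ∑ x, f x ^ 2 = 2 := by
    have : ∀ x, f x ^ 2 = (2 * p x + 4 * q x)/3 := by
      intro x; have := hp.1 x; have := hq.1 x
      exact Real.sq_sqrt (by positivity)
    simp only [this]
    rw [← Finset.sum_div, Finset.sum_add_distrib, ← Finset.mul_sum, ← Finset.mul_sum,
      hp.2, hq.2]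
    norm_num
  have hg2 : ∑ x, g x ^ 2 = KL p q := by
    have : ∀ x, g x ^ 2 = Tterm p q x := fun x => Real.sq_sqrt (hT x)
    simp only [this]; exact sum_T p q hp hq
  rw [hf2, hg2] at hcs
  have hfgnn : 0 ≤ ∑ x, f x * g x :=
    Finset.sum_nonneg fun x _ => mul_nonneg (Real.sqrt_nonneg _) (Real.sqrt_nonneg _)
  have : ∑ x, f x * g x ≤ Real.sqrt (2 * KL p q) := by
    have hKL : 0 ≤ 2 * KL p q := by
      nlinarith [sq_nonneg (∑ x, f x * g x)]
    exact (Real.le_sqrt hfgnn hKL).2 hcs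
  linarith
end Pinsker

/-- Expected value of perfect observation upper bound. -/
theorem evpo_upper_bound
    {S O A : Type*} [Fintype S] [Fintype O] [Fintype A] [Nonempty S] [Nonempty A]
    (b : S → ℝ) (hb : IsBelief b)
    (P : S → O → ℝ) (hP : ∀ s, IsBelief (P s))
    (R : S → A → ℝ)
    (Rmax : ℝ)
    (hRmax : Rmax = Finset.univ.sup' Finset.univ_nonempty
        (fun p : S × A => |R p.1 p.2|)) :
    (∑ o, if 0 < (∑ s, P s o * b s) then
        (∑ s, P s o * b s) *
          (Finset.univ.sup' Finset.univ_nonempty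
            (fun a => ∑ s, (P s o * b s / (∑ s', P s' o * b s')) * R s a))
      else 0)
    - Finset.univ.sup' Finset.univ_nonempty (fun a => ∑ s, b s * R s a)
    ≤ Rmax * Real.sqrt (2 * ∑ o, if 0 < (∑ s, P s o * b s) then
        (∑ s, P s o * b s) *
          KL (fun s => P s o * b s / (∑ s', P s' o * b s')) b
      else 0) := by
  classical
  set m : O → ℝ := fun o => ∑ s, P s o * b s with hm
  have hmnn : ∀ o, 0 ≤ m o := fun o =>
    Finset.sum_nonneg fun s _ => mul_nonneg ((hP s).1 o) (hb.1 s)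
  have hmsum : ∑ o, m o = 1 := by
    rw [hm]
    rw [Finset.sum_comm]
    have : ∀ s, ∑ o, P s o * b s = b s := by
      intro s; rw [← Finset.sum_mul, (hP s).2, one_mul]
    simp only [this, hb.2]
  -- posterior
  set post : O → S → ℝ := fun o s => P s o * b s / m o with hpost
  have hpostB : ∀ o, 0 < m o → IsBelief (post o) := by
    intro o ho
    constructor
    · intro s; exact div_nonneg (mul_nonneg ((hP s).1 o) (hb.1 s)) (hmnn o)
    · rw [hpost]; simp only
      rw [← Finset.sum_div, div_eq_one_iff_eq ho.ne']
  have hac : ∀ o, ∀ s, b s = 0 → post o s = 0 := by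
    intro o s hbs; simp [hpost, hbs]
  -- Rmax bounds
  have hRnn : 0 ≤ Rmax := by
    rw [hRmax]
    obtain ⟨p0⟩ := (inferInstance : Nonempty (S × A))
    exact le_trans (abs_nonneg (R p0.1 p0.2)) (Finset.le_sup' (fun p : S × A => |R p.1 p.2|) (Finset.mem_univ p0))
  have hRb : ∀ s a, |R s a| ≤ Rmax := by
    intro s a; rw [hRmax]
    exact Finset.le_sup' (fun p : S × A => |R p.1 p.2|) (Finset.mem_univ (s, a))
  set supPr : ℝ := Finset.univ.sup' Finset.univ_nonempty (fun a => ∑ s, b s * R s a)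
  set supPo : O → ℝ := fun o => Finset.univ.sup' Finset.univ_nonempty
      (fun a => ∑ s, post o s * R s a) with hsupPo
  set KLo : O → ℝ := fun o => KL (post o) b with hKLo
  have hKLnn : ∀ o, 0 < m o → 0 ≤ KLo o := fun o ho =>
    KL_nonneg _ _ (hpostB o ho) hb (hac o)
  -- per-observation bound
  have hdiff : ∀ o, 0 < m o → supPo o - supPr ≤ Rmax * Real.sqrt (2 * KLo o) := by
    intro o ho
    obtain ⟨a, _, ha⟩ := Finset.exists_mem_eq_sup' (Finset.univ_nonempty (α := A))
      (fun a => ∑ s, post o s * R s a)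
    have h1 : supPr ≥ ∑ s, b s * R s a :=
      Finset.le_sup' (fun a => ∑ s, b s * R s a) (Finset.mem_univ a)
    have h2 : supPo o - supPr ≤ ∑ s, post o s * R s a - ∑ s, b s * R s a := by
      rw [hsupPo]; simp only; rw [ha]; linarith
    have h3 : ∑ s, post o s * R s a - ∑ s, b s * R s a
        ≤ Rmax * ∑ s, |post o s - b s| := by
      rw [← Finset.sum_sub_distrib, Finset.mul_sum]
      apply Finset.sum_le_sum
      intro s _
      have : post o s * R s a - b s * R s a = (post o s - b s) * R s a := by ring
      rw [this]
      calc (post o s - b s) * R s a ≤ |(post o s - b s) * R s a| := le_abs_self _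
        _ = |post o s - b s| * |R s a| := abs_mul _ _
        _ ≤ |post o s - b s| * Rmax := by
            exact mul_le_mul_of_nonneg_left (hRb s a) (abs_nonneg _)
        _ = Rmax * |post o s - b s| := mul_comm _ _
    have h4 := pinsker (post o) b (hpostB o ho) hb (hac o)
    calc supPo o - supPr ≤ Rmax * ∑ s, |post o s - b s| := le_trans h2 h3
      _ ≤ Rmax * Real.sqrt (2 * KLo o) := mul_le_mul_of_nonneg_left h4 hRnn
  -- rewrite LHS
  have hmsum' : ∑ o, (if 0 < m o then m o else 0) = 1 := by
    rw [← hmsum]; apply Finset.sum_congr rfl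
    intro o _
    rcases lt_or_eq_of_le (hmnn o) with h | h
    · rw [if_pos h]
    · rw [if_neg (by rw [← h]; exact lt_irrefl 0), ← h]
  have hLHS : (∑ o, if 0 < m o then m o * supPo o else 0) - supPr
      = ∑ o, if 0 < m o then m o * (supPo o - supPr) else 0 := by
    have : supPr = (∑ o, (if 0 < m o then m o else 0)) * supPr := by
      rw [hmsum', one_mul]
    conv_lhs => rw [this]
    rw [Finset.sum_mul, ← Finset.sum_sub_distrib]
    apply Finset.sum_congr rfl
    intro o _
    split
    · ring
    · ring
  -- Cauchy-Schwarz / Jensen step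
  set f : O → ℝ := fun o => if 0 < m o then Real.sqrt (m o) else 0
  set g : O → ℝ := fun o => if 0 < m o then Real.sqrt (m o * (2 * KLo o)) else 0
  have hfg : ∀ o, (if 0 < m o then m o * Real.sqrt (2 * KLo o) else 0) = f o * g o := by
    intro o
    by_cases h : 0 < m o
    · simp only [f, g, if_pos h]
      rw [Real.sqrt_mul (hmnn o), ← mul_assoc, Real.mul_self_sqrt (hmnn o)]
    · simp [f, g, if_neg h]
  have hcs := Finset.sum_mul_sq_le_sq_mul_sq Finset.univ f g
  have hf2 : ∑ o, f o ^ 2 = 1 := by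
    rw [← hmsum']
    apply Finset.sum_congr rfl
    intro o _
    by_cases h : 0 < m o
    · simp only [f, if_pos h]; exact Real.sq_sqrt (hmnn o)
    · simp [f, if_neg h]
  have hg2 : ∑ o, g o ^ 2 = 2 * ∑ o, (if 0 < m o then m o * KLo o else 0) := by
    rw [Finset.mul_sum]
    apply Finset.sum_congr rfl
    intro o _
    by_cases h : 0 < m o
    · simp only [g, if_pos h]
      rw [Real.sq_sqrt (mul_nonneg (hmnn o) (by linarith [hKLnn o h]))]
      ring
    · simp [g, if_neg h]
  have hvnn : 0 ≤ ∑ o, (if 0 < m o then m o * KLo o else 0) := by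
    apply Finset.sum_nonneg
    intro o _
    split
    · next h => exact mul_nonneg (hmnn o) (hKLnn o h)
    · exact le_refl 0
  have hfgnn : 0 ≤ ∑ o, f o * g o :=
    Finset.sum_nonneg fun o _ => by
      by_cases h : 0 < m o
      · simp only [f, g, if_pos h]; positivity
      · simp [f, g, if_neg h]
  rw [hf2, hg2, one_mul] at hcs
  have hjensen : ∑ o, f o * g o
      ≤ Real.sqrt (2 * ∑ o, (if 0 < m o then m o * KLo o else 0)) :=
    (Real.le_sqrt hfgnn (by linarith)).2 hcs
  show (∑ o, if 0 < m o then m o * supPo o else 0) - supPr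
      ≤ Rmax * Real.sqrt (2 * ∑ o, if 0 < m o then m o * KLo o else 0)
  rw [hLHS]
  calc ∑ o, (if 0 < m o then m o * (supPo o - supPr) else 0)
      ≤ ∑ o, (if 0 < m o then m o * (Rmax * Real.sqrt (2 * KLo o)) else 0) := by
        apply Finset.sum_le_sum
        intro o _
        split
        · next h => exact mul_le_mul_of_nonneg_left (hdiff o h) (hmnn o)
        · exact le_refl 0
    _ = Rmax * ∑ o, (if 0 < m o then m o * Real.sqrt (2 * KLo o) else 0) := by
        rw [Finset.mul_sum]
        apply Finset.sum_congr rfl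
        intro o _
        split
        · ring
        · ring
    _ = Rmax * ∑ o, f o * g o := by
        rw [Finset.sum_congr rfl fun o _ => hfg o]
    _ ≤ Rmax * Real.sqrt (2 * ∑ o, (if 0 < m o then m o * KLo o else 0)) :=
        mul_le_mul_of_nonneg_left hjensen hRnn
end

section
/- For every k ∈ ℕ, every belief b over S, and every a ∈ A, the closed-loop value functions dominate the open-loop value functions: Q_k(b,a) ≥ Q^{open}_k(b,a) and V_k(b) ≥ V^{open}_k(b). -/
/-- Predicted (one-step open-loop) belief `b_a(s') = ∑_s P(s'|s,a) b(s)`. -/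
noncomputable def predBelief {S A : Type*} [Fintype S]
    (T : S → A → S → ℝ) (b : S → ℝ) (a : A) (s' : S) : ℝ :=
  ∑ s, T s a s' * b s

/-- Observation predictive `P(o'|b,a) = ∑_{s'} P(o'|s') b_a(s')`. -/
noncomputable def obsPred {S O A : Type*} [Fintype S]
    (T : S → A → S → ℝ) (L : S → O → ℝ) (b : S → ℝ) (a : A) (o : O) : ℝ :=
  ∑ s', L s' o * predBelief T b a s'

/-- Posterior `τ(b,a,o')(s') = P(o'|s') b_a(s') / P(o'|b,a)`. -/
noncomputable def postBelief {S O A : Type*} [Fintype S]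
    (T : S → A → S → ℝ) (L : S → O → ℝ) (b : S → ℝ) (a : A) (o : O) (s' : S) : ℝ :=
  L s' o * predBelief T b a s' / obsPred T L b a o

/-- Information gain `IG(b,a)`. -/
noncomputable def IG {S O A : Type*} [Fintype S] [Fintype O]
    (T : S → A → S → ℝ) (L : S → O → ℝ) (b : S → ℝ) (a : A) : ℝ :=
  ∑ o, if 0 < obsPred T L b a o then
    obsPred T L b a o * KL (postBelief T L b a o) (predBelief T b a) else 0

/-- Closed-loop finite-horizon action value `Q_k(b,a)`. -/
noncomputable def Qclosed {S O A : Type*} [Fintype S] [Fintype O] [Fintype A] [Nonempty A]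
    (γ : ℝ) (T : S → A → S → ℝ) (L : S → O → ℝ) (R : S → A → ℝ) :
    ℕ → (S → ℝ) → A → ℝ
  | 0, b, a => ∑ s, b s * R s a
  | (k + 1), b, a =>
      (∑ s, b s * R s a) + γ * ∑ o, if 0 < obsPred T L b a o then
        obsPred T L b a o *
          Finset.univ.sup' Finset.univ_nonempty (Qclosed γ T L R k (postBelief T L b a o))
      else 0

/-- Closed-loop finite-horizon value `V_k(b) = max_a Q_k(b,a)`. -/
noncomputable def Vclosed {S O A : Type*} [Fintype S] [Fintype O] [Fintype A] [Nonempty A]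
    (γ : ℝ) (T : S → A → S → ℝ) (L : S → O → ℝ) (R : S → A → ℝ)
    (k : ℕ) (b : S → ℝ) : ℝ :=
  Finset.univ.sup' Finset.univ_nonempty (Qclosed γ T L R k b)

/-- Open-loop finite-horizon action value `Q^{open}_k(b,a)`. -/
noncomputable def Qopen {S A : Type*} [Fintype S] [Fintype A] [Nonempty A]
    (γ : ℝ) (T : S → A → S → ℝ) (R : S → A → ℝ) :
    ℕ → (S → ℝ) → A → ℝ
  | 0, b, a => ∑ s, b s * R s a
  | (k + 1), b, a =>
      (∑ s, b s * R s a) +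
        γ * Finset.univ.sup' Finset.univ_nonempty (Qopen γ T R k (predBelief T b a))

/-- Open-loop finite-horizon value `V^{open}_k(b) = max_a Q^{open}_k(b,a)`. -/
noncomputable def Vopen {S A : Type*} [Fintype S] [Fintype A] [Nonempty A]
    (γ : ℝ) (T : S → A → S → ℝ) (R : S → A → ℝ)
    (k : ℕ) (b : S → ℝ) : ℝ :=
  Finset.univ.sup' Finset.univ_nonempty (Qopen γ T R k b)

section Aux
set_option linter.unusedSectionVars false
universe u v w
variable {S : Type u} {O : Type v} {A : Type w} [Fintype S] [Fintype O] [Fintype A] [Nonempty A]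

lemma predBelief_isBelief (T : S → A → S → ℝ) (hT : ∀ s a, IsBelief (T s a))
    {b : S → ℝ} (hb : IsBelief b) (a : A) : IsBelief (predBelief T b a) := by
  refine ⟨fun s' => Finset.sum_nonneg fun s _ => mul_nonneg ((hT s a).1 s') (hb.1 s), ?_⟩
  unfold predBelief
  rw [Finset.sum_comm]
  have h : ∀ s ∈ Finset.univ, (∑ s', T s a s' * b s) = b s := fun s _ => by
    rw [← Finset.sum_mul, (hT s a).2, one_mul]
  rw [Finset.sum_congr rfl h, hb.2]

lemma obsPred_nonneg (T : S → A → S → ℝ) (hT : ∀ s a, IsBelief (T s a))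
    (L : S → O → ℝ) (hL : ∀ s, IsBelief (L s))
    {b : S → ℝ} (hb : IsBelief b) (a : A) (o : O) : 0 ≤ obsPred T L b a o :=
  Finset.sum_nonneg fun s' _ => mul_nonneg ((hL s').1 o)
    ((predBelief_isBelief T hT hb a).1 s')

lemma sum_obsPred (T : S → A → S → ℝ) (hT : ∀ s a, IsBelief (T s a))
    (L : S → O → ℝ) (hL : ∀ s, IsBelief (L s))
    {b : S → ℝ} (hb : IsBelief b) (a : A) : ∑ o, obsPred T L b a o = 1 := by
  unfold obsPred
  rw [Finset.sum_comm]
  have h : ∀ s' ∈ Finset.univ, (∑ o, L s' o * predBelief T b a s')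
      = predBelief T b a s' := fun s' _ => by
    rw [← Finset.sum_mul, (hL s').2, one_mul]
  rw [Finset.sum_congr rfl h, (predBelief_isBelief T hT hb a).2]

lemma obsPred_zero (T : S → A → S → ℝ) (hT : ∀ s a, IsBelief (T s a))
    (L : S → O → ℝ) (hL : ∀ s, IsBelief (L s))
    {b : S → ℝ} (hb : IsBelief b) (a : A) {o : O} (h : obsPred T L b a o = 0) :
    ∀ s', L s' o * predBelief T b a s' = 0 := by
  intro s'
  have := (Finset.sum_eq_zero_iff_of_nonneg (fun s' _ =>
    mul_nonneg ((hL s').1 o) ((predBelief_isBelief T hT hb a).1 s'))).1 h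
  exact this s' (Finset.mem_univ s')

lemma postBelief_isBelief (T : S → A → S → ℝ) (hT : ∀ s a, IsBelief (T s a))
    (L : S → O → ℝ) (hL : ∀ s, IsBelief (L s))
    {b : S → ℝ} (hb : IsBelief b) (a : A) {o : O} (h : 0 < obsPred T L b a o) :
    IsBelief (postBelief T L b a o) := by
  constructor
  · intro s'
    exact div_nonneg (mul_nonneg ((hL s').1 o) ((predBelief_isBelief T hT hb a).1 s')) h.le
  · unfold postBelief
    rw [← Finset.sum_div, div_eq_one_iff_eq h.ne']
    rfl

lemma mix_post (T : S → A → S → ℝ) (hT : ∀ s a, IsBelief (T s a))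
    (L : S → O → ℝ) (hL : ∀ s, IsBelief (L s))
    {b : S → ℝ} (hb : IsBelief b) (a : A) (s' : S) :
    ∑ o, (if 0 < obsPred T L b a o then obsPred T L b a o * postBelief T L b a o s' else 0)
      = predBelief T b a s' := by
  have h : ∀ o ∈ Finset.univ,
      (if 0 < obsPred T L b a o then obsPred T L b a o * postBelief T L b a o s' else 0)
        = L s' o * predBelief T b a s' := by
    intro o _
    split
    · next hpos =>
      unfold postBelief
      rw [mul_div_cancel₀ _ hpos.ne']
    · next hneg =>
      have h0 : obsPred T L b a o = 0 :=
        le_antisymm (not_lt.1 hneg) (obsPred_nonneg T hT L hL hb a o)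
      exact (obsPred_zero T hT L hL hb a h0 s').symm
  rw [Finset.sum_congr rfl h, ← Finset.sum_mul, (hL s').2, one_mul]

/-- mixture linearity of predBelief -/
lemma predBelief_mix (T : S → A → S → ℝ) {ι : Type v} [Fintype ι]
    (w : ι → ℝ) (bs : ι → S → ℝ) (a : A) (s' : S) :
    predBelief T (fun s => ∑ i, w i * bs i s) a s' = ∑ i, w i * predBelief T (bs i) a s' := by
  unfold predBelief
  simp only [Finset.mul_sum]
  rw [Finset.sum_comm]
  refine Finset.sum_congr rfl fun i _ => Finset.sum_congr rfl fun s _ => by ring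

lemma qopen_mix_le (γ : ℝ) (hγ0 : 0 ≤ γ)
    (T : S → A → S → ℝ) (hT : ∀ s a, IsBelief (T s a))
    (L : S → O → ℝ) (hL : ∀ s, IsBelief (L s))
    (R : S → A → ℝ) :
    ∀ (k : ℕ) (ι : Type v) (_ : Fintype ι) (w : ι → ℝ), (∀ i, 0 ≤ w i) → (∑ i, w i) = 1 →
      ∀ (bs : ι → S → ℝ), (∀ i, 0 < w i → IsBelief (bs i)) → ∀ a : A,
      Qopen γ T R k (fun s => ∑ i, w i * bs i s) a ≤ ∑ i, w i * Qclosed γ T L R k (bs i) a := by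
  intro k
  induction k with
  | zero =>
    intro ι _ w hw hw1 bs hb a
    apply le_of_eq
    simp only [Qopen, Qclosed, Finset.sum_mul, Finset.mul_sum]
    rw [Finset.sum_comm]
    exact Finset.sum_congr rfl fun i _ => Finset.sum_congr rfl fun s _ => by ring
  | succ k ih =>
    intro ι instι w hw hw1 bs hb a
    set m : S → ℝ := fun s => ∑ i, w i * bs i s with hm
    -- reward linearity
    have hrew : (∑ s, m s * R s a) = ∑ i, w i * ∑ s, bs i s * R s a := by
      simp only [hm, Finset.sum_mul, Finset.mul_sum]
      rw [Finset.sum_comm]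
      exact Finset.sum_congr rfl fun i _ => Finset.sum_congr rfl fun s _ => by ring
    -- maximizer of open-loop continuation
    obtain ⟨a', -, ha'⟩ := Finset.exists_mem_eq_sup' (Finset.univ_nonempty (α := A))
      (Qopen γ T R k (predBelief T m a))
    -- weights over pairs
    set P : ι → O → ℝ := fun i o => obsPred T L (bs i) a o with hP
    set W : ι × O → ℝ := fun p => if 0 < P p.1 p.2 then w p.1 * P p.1 p.2 else 0 with hW
    set BS : ι × O → S → ℝ := fun p => postBelief T L (bs p.1) a p.2 with hBS
    have hWnn : ∀ p, 0 ≤ W p := by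
      intro p; simp only [hW]
      split
      · next hp => exact mul_nonneg (hw p.1) hp.le
      · exact le_refl 0
    have hwcases : ∀ i : ι, w i = 0 ∨ 0 < w i := fun i => (hw i).eq_or_lt.imp Eq.symm id
    have hWrow : ∀ i : ι, (∑ o, W (i, o)) = w i := by
      intro i
      rcases hwcases i with h0 | hpos
      · rw [h0]
        refine Finset.sum_eq_zero fun o _ => ?_
        simp only [hW]
        split
        · rw [h0, zero_mul]
        · rfl
      · have hbi := hb i hpos
        have : ∀ o ∈ Finset.univ, W (i, o) = w i * P i o := by
          intro o _
          simp only [hW]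
          split
          · rfl
          · next hneg =>
            have : P i o = 0 := le_antisymm (not_lt.1 hneg) (obsPred_nonneg T hT L hL hbi a o)
            rw [this, mul_zero]
        rw [Finset.sum_congr rfl this, ← Finset.mul_sum, sum_obsPred T hT L hL hbi a, mul_one]
    have hW1 : ∑ p, W p = 1 := by
      rw [Fintype.sum_prod_type]
      rw [Finset.sum_congr rfl (fun i _ => hWrow i), hw1]
    have hWb : ∀ p, 0 < W p → IsBelief (BS p) := by
      intro p hp
      simp only [hW] at hp
      by_cases hcase : 0 < P p.1 p.2
      · rw [if_pos hcase] at hp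
        have hwi : 0 < w p.1 := by
          rcases hwcases p.1 with h0 | hpos
          · rw [h0, zero_mul] at hp; exact absurd hp (lt_irrefl 0)
          · exact hpos
        exact postBelief_isBelief T hT L hL (hb p.1 hwi) a hcase
      · rw [if_neg hcase] at hp; exact absurd hp (lt_irrefl 0)
    -- mixture of posteriors is the predicted belief
    have hmix : predBelief T m a = fun s' => ∑ p, W p * BS p s' := by
      funext s'
      rw [predBelief_mix]
      rw [Fintype.sum_prod_type]
      refine Finset.sum_congr rfl fun i _ => ?_
      rcases hwcases i with h0 | hpos
      · rw [h0, zero_mul]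
        refine (Finset.sum_eq_zero fun o _ => ?_).symm
        simp only [hW]
        split
        · rw [h0, zero_mul, zero_mul]
        · rw [zero_mul]
      · have hbi := hb i hpos
        have heach : ∀ o ∈ Finset.univ, W (i, o) * BS (i, o) s'
            = w i * (if 0 < P i o then P i o * postBelief T L (bs i) a o s' else 0) := by
          intro o _
          simp only [hW, hBS]
          split
          · ring
          · rw [zero_mul, mul_zero]
        rw [Finset.sum_congr rfl heach, ← Finset.mul_sum,
          mix_post T hT L hL hbi a s']
    -- main chain
    have hihtail : Qopen γ T R k (predBelief T m a) a'
        ≤ ∑ p, W p * Qclosed γ T L R k (BS p) a' := by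
      have := ih (ι × O) inferInstance W hWnn hW1 BS hWb a'
      rw [← hmix] at this
      exact this
    have hsup : ∀ p, Qclosed γ T L R k (BS p) a'
        ≤ Finset.univ.sup' Finset.univ_nonempty (Qclosed γ T L R k (BS p)) :=
      fun p => Finset.le_sup' _ (Finset.mem_univ a')
    have hstep : Qopen γ T R k (predBelief T m a) a'
        ≤ ∑ p, W p * Finset.univ.sup' Finset.univ_nonempty (Qclosed γ T L R k (BS p)) :=
      hihtail.trans (Finset.sum_le_sum fun p _ =>
        mul_le_mul_of_nonneg_left (hsup p) (hWnn p))
    -- rewrite RHS of hstep into the closed-loop sum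
    have hrhs : (∑ p, W p * Finset.univ.sup' Finset.univ_nonempty (Qclosed γ T L R k (BS p)))
        = ∑ i, w i * ∑ o, (if 0 < P i o then P i o *
            Finset.univ.sup' Finset.univ_nonempty
              (Qclosed γ T L R k (postBelief T L (bs i) a o)) else 0) := by
      rw [Fintype.sum_prod_type]
      refine Finset.sum_congr rfl fun i _ => ?_
      rw [Finset.mul_sum]
      refine Finset.sum_congr rfl fun o _ => ?_
      simp only [hW, hBS]
      split
      · ring
      · rw [zero_mul, mul_zero]
    show (∑ s, m s * R s a) + γ * Finset.univ.sup' Finset.univ_nonempty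
        (Qopen γ T R k (predBelief T m a)) ≤ _
    rw [ha', hrew]
    calc (∑ i, w i * ∑ s, bs i s * R s a) + γ * Qopen γ T R k (predBelief T m a) a'
        ≤ (∑ i, w i * ∑ s, bs i s * R s a) + γ * ∑ i, w i * ∑ o, (if 0 < P i o then P i o *
            Finset.univ.sup' Finset.univ_nonempty
              (Qclosed γ T L R k (postBelief T L (bs i) a o)) else 0) := by
          have := hstep.trans (le_of_eq hrhs)
          exact add_le_add le_rfl (mul_le_mul_of_nonneg_left this hγ0)
      _ = ∑ i, w i * Qclosed γ T L R (k + 1) (bs i) a := by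
          show _ = ∑ i, w i * ((∑ s, bs i s * R s a) + γ * ∑ o, _)
          rw [Finset.mul_sum]
          rw [← Finset.sum_add_distrib]
          refine Finset.sum_congr rfl fun i _ => by ring

end Aux

section Final
universe u v w
variable {S : Type u} {O : Type v} {A : Type w} [Fintype S] [Fintype O] [Fintype A] [Nonempty A]

lemma qclosed_ge_qopen (γ : ℝ) (hγ0 : 0 ≤ γ)
    (T : S → A → S → ℝ) (hT : ∀ s a, IsBelief (T s a))
    (L : S → O → ℝ) (hL : ∀ s, IsBelief (L s))
    (R : S → A → ℝ) (k : ℕ) {b : S → ℝ} (hb : IsBelief b) (a : A) :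
    Qopen γ T R k b a ≤ Qclosed γ T L R k b a := by
  have h := qopen_mix_le γ hγ0 T hT L hL R k (PUnit.{v+1}) inferInstance
    (fun _ => 1) (fun _ => zero_le_one) (by simp)
    (fun _ => b) (fun _ _ => hb) a
  simpa using h

end Final

/-- Closed-loop value functions dominate open-loop value functions
(finite-horizon form of Proposition 3: EVPO ≥ 0 in POMDPs). -/
theorem closed_loop_dominates_open_loop
    {S O A : Type*} [Fintype S] [Fintype O] [Fintype A] [Nonempty A]
    (γ : ℝ) (hγ0 : 0 < γ) (hγ1 : γ < 1)
    (T : S → A → S → ℝ) (hT : ∀ s a, IsBelief (T s a))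
    (L : S → O → ℝ) (hL : ∀ s, IsBelief (L s))
    (R : S → A → ℝ) :
    ∀ (k : ℕ) (b : S → ℝ), IsBelief b → ∀ a : A,
      Qclosed γ T L R k b a ≥ Qopen γ T R k b a ∧
      Vclosed γ T L R k b ≥ Vopen γ T R k b := by
  intro k b hb a
  have hQ : Qopen γ T R k b a ≤ Qclosed γ T L R k b a :=
    qclosed_ge_qopen γ hγ0.le T hT L hL R k hb a
  refine ⟨hQ, ?_⟩
  refine Finset.sup'_le _ _ fun a' _ => ?_
  exact (qclosed_ge_qopen γ hγ0.le T hT L hL R k hb a').trans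
    (Finset.le_sup' _ (Finset.mem_univ a'))
end
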